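/- arXiv:2407.06929 — 2 statements merged into one kernel-verified Lean document; each statement's English description precedes it below -/
import Mathlib

section
/- For every real y: if |y − 1| ≤ 1/2 then |β̂(iy)| ≤ 1 − (y − 1)²; if |y + 1| ≤ 1/2 then |β̂(iy)| ≤ 1 − (y + 1)²; and if both |y − 1| > 1/2 and |y + 1| > 1/2 then |β̂(iy)| ≤ 3/4. -/
open Complex intervalIntegral

/-- The scaled filter-transfer function
`β̂(z) = (1/π) ∫₀^{2π} (cos s − 1/4) e^{z s} ds`. -/
noncomputable def betaHat (z : ℂ) : ℂ :=
  (1 / (Real.pi : ℂ)) * ∫ s in (0:ℝ)..(2 * Real.pi), ((Real.cos s : ℂ) - 1/4) * Complex.exp (z * s)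

section Aux

open Real

/- ### Elementary Taylor-type bounds for sin and cos -/

private lemma betaAux_mono {f : ℝ → ℝ} {f' : ℝ → ℝ} (hd : ∀ x, HasDerivAt f (f' x) x)
    (h0 : f 0 = 0) (hnn : ∀ x, 0 ≤ x → 0 ≤ f' x) {x : ℝ} (hx : 0 ≤ x) : 0 ≤ f x := by
  have hmono : MonotoneOn f (Set.Ici (0:ℝ)) := by
    apply monotoneOn_of_deriv_nonneg (convex_Ici (0:ℝ))
    · exact fun y _ => ((hd y).differentiableAt.continuousAt).continuousWithinAt
    · exact fun y _ => (hd y).differentiableAt.differentiableWithinAt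
    · intro y hy
      rw [interior_Ici] at hy
      rw [(hd y).deriv]
      exact hnn y (le_of_lt hy)
  calc 0 = f 0 := h0.symm
    _ ≤ f x := hmono Set.self_mem_Ici hx hx

private lemma betaAux_sin_ge_cubic {x : ℝ} (hx : 0 ≤ x) : x - x^3/6 ≤ Real.sin x := by
  have hd : ∀ t : ℝ, HasDerivAt (fun t => Real.sin t - (t - t^3/6)) (Real.cos t - (1 - t^2/2)) t := by
    intro t
    have h1 : HasDerivAt (fun t : ℝ => t - t^3/6) (1 - 3*t^2/6) t := by
      exact ((hasDerivAt_id t).sub (((hasDerivAt_pow 3 t)).div_const 6)).congr_deriv (by norm_num)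
    have h2 := (Real.hasDerivAt_sin t).sub h1
    exact h2.congr_deriv (by ring)
  have := betaAux_mono hd (by simp) (fun t _ => by
    have := Real.one_sub_sq_div_two_le_cos (x := t); linarith) hx
  linarith

private lemma betaAux_cos_le_quartic (x : ℝ) : Real.cos x ≤ 1 - x^2/2 + x^4/24 := by
  wlog hx : 0 ≤ x with H
  · have := H (-x) (by linarith)
    rw [Real.cos_neg] at this; convert this using 2 <;> ring
  have hd : ∀ t : ℝ, HasDerivAt (fun t => (1 - t^2/2 + t^4/24) - Real.cos t)
      ((t^3/6 - t) + Real.sin t) t := by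
    intro t
    have := ((((hasDerivAt_const t (1:ℝ)).sub ((hasDerivAt_pow 2 t).div_const 2)).add
      ((hasDerivAt_pow 4 t).div_const 24)).sub (Real.hasDerivAt_cos t))
    exact this.congr_deriv (by norm_num; ring)
  have := betaAux_mono hd (by simp) (fun t ht => by
    have := betaAux_sin_ge_cubic ht; linarith) hx
  linarith

private lemma betaAux_sin_le_quintic {x : ℝ} (hx : 0 ≤ x) :
    Real.sin x ≤ x - x^3/6 + x^5/120 := by
  have hd : ∀ t : ℝ, HasDerivAt (fun t => (t - t^3/6 + t^5/120) - Real.sin t)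
      ((1 - t^2/2 + t^4/24) - Real.cos t) t := by
    intro t
    have := (((hasDerivAt_id t).sub ((hasDerivAt_pow 3 t).div_const 6)).add
      ((hasDerivAt_pow 5 t).div_const 120)).sub (Real.hasDerivAt_sin t)
    exact this.congr_deriv (by norm_num; ring)
  have := betaAux_mono hd (by simp) (fun t ht => by
    have := betaAux_cos_le_quartic t; linarith) hx
  linarith

private lemma betaAux_sin_pi_mul_le {u : ℝ} (hu : 0 ≤ u) :
    Real.sin (π*u) ≤ π*u*(1 - (3.1415*u)^2/6 + (3.1416*u)^4/120) := by
  have h5 := betaAux_sin_le_quintic (mul_nonneg Real.pi_nonneg hu)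
  have hπl : (3.1415:ℝ) ≤ π := by linarith [Real.pi_gt_d6]
  have hπu : π ≤ 3.1416 := by linarith [Real.pi_lt_d6]
  have h3 : (3.1415:ℝ)^2*u^2 ≤ π^2*u^2 := by
    have : (3.1415:ℝ)^2 ≤ π^2 := by nlinarith
    exact mul_le_mul_of_nonneg_right this (sq_nonneg u)
  have h4 : π^4*u^4 ≤ (3.1416:ℝ)^4*u^4 := by
    have : π^4 ≤ (3.1416:ℝ)^4 := pow_le_pow_left₀ Real.pi_nonneg hπu 4
    exact mul_le_mul_of_nonneg_right this (pow_nonneg hu 4)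
  have hπu0 : 0 ≤ π*u := mul_nonneg Real.pi_nonneg hu
  nlinarith [mul_le_mul_of_nonneg_left h3 hπu0, mul_le_mul_of_nonneg_left h4 hπu0]

/- ### The elementary exponential integral -/

private noncomputable def Jint (a : ℝ) : ℂ :=
  ∫ s in (0:ℝ)..(2 * Real.pi), Complex.exp (Complex.I * a * s)

private lemma Jint_integrable (a : ℝ) :
    IntervalIntegrable (fun s : ℝ => Complex.exp (Complex.I * a * s))
      MeasureTheory.volume 0 (2*Real.pi) := by
  apply Continuous.intervalIntegrable
  fun_prop

private lemma Jint_zero : Jint 0 = 2 * Real.pi := by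
  simp [Jint]

private lemma Jint_ne {a : ℝ} (ha : a ≠ 0) :
    Jint a = (Complex.exp (2*Real.pi*a*Complex.I) - 1) / (Complex.I * a) := by
  have hc : (Complex.I * (a:ℂ)) ≠ 0 := by
    simp [Complex.ext_iff, ha]
  rw [Jint, integral_exp_mul_complex hc]
  norm_num
  congr 2
  congr 1; ring

private lemma Jint_eq_zero (a : ℝ) (n : ℤ) (ha : a ≠ 0) (han : (a:ℂ) = n) : Jint a = 0 := by
  rw [Jint_ne ha]
  have h1 : Complex.exp (2*Real.pi*(a:ℂ)*Complex.I) = 1 := by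
    rw [show 2*(Real.pi:ℂ)*(a:ℂ)*Complex.I = n*(2*Real.pi*Complex.I) by rw [han]; push_cast; ring]
    exact Complex.exp_int_mul_two_pi_mul_I n
  rw [h1]; simp

private lemma betaHat_decomp (y : ℝ) :
    betaHat (Complex.I * y) = (1 / (Real.pi : ℂ)) *
      ((1/2) * Jint (y+1) + (1/2) * Jint (y-1) - (1/4) * Jint y) := by
  have key : ∀ s : ℝ, ((Real.cos s : ℂ) - 1/4) * Complex.exp (Complex.I * y * s)
      = (1/2) * Complex.exp (Complex.I * ((y:ℝ)+1 : ℝ) * s)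
        + (1/2) * Complex.exp (Complex.I * ((y:ℝ)-1 : ℝ) * s)
        - (1/4) * Complex.exp (Complex.I * y * s) := by
    intro s
    have h1 : (Complex.I * (((y:ℝ)+1 : ℝ):ℂ) * s) = Complex.I * s + Complex.I * y * s := by
      push_cast; ring
    have h2 : (Complex.I * (((y:ℝ)-1 : ℝ):ℂ) * s) = -(Complex.I * s) + Complex.I * y * s := by
      push_cast; ring
    have hc : (Real.cos s : ℂ)
        = (Complex.exp (Complex.I * s) + Complex.exp (-(Complex.I * s)))/2 := by
      rw [Complex.ofReal_cos, Complex.cos]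
      ring_nf
    rw [h1, h2, Complex.exp_add, Complex.exp_add, hc]
    ring
  rw [betaHat, intervalIntegral.integral_congr (g := fun s : ℝ =>
      (1/2) * Complex.exp (Complex.I * ((y:ℝ)+1 : ℝ) * s)
        + (1/2) * Complex.exp (Complex.I * ((y:ℝ)-1 : ℝ) * s)
        - (1/4) * Complex.exp (Complex.I * y * s)) (fun s _ => key s)]
  rw [intervalIntegral.integral_sub (((Jint_integrable (y+1)).const_mul _).add
      ((Jint_integrable (y-1)).const_mul _)) ((Jint_integrable y).const_mul _),
    intervalIntegral.integral_add ((Jint_integrable (y+1)).const_mul _)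
      ((Jint_integrable (y-1)).const_mul _),
    intervalIntegral.integral_const_mul, intervalIntegral.integral_const_mul,
    intervalIntegral.integral_const_mul]
  rfl

private lemma betaHat_formula (y : ℝ) (h0 : y ≠ 0) (h1 : y ≠ 1) (h2 : y ≠ -1) :
    betaHat (Complex.I * y) = (1 / (Real.pi : ℂ)) * (Complex.exp (2*Real.pi*y*Complex.I) - 1)
      * ((3*(y:ℂ)^2+1) / (4 * Complex.I * y * ((y:ℂ)^2-1))) := by
  have hπ : (Real.pi : ℂ) ≠ 0 := by
    simpa using Real.pi_ne_zero
  have hy : (y:ℂ) ≠ 0 := Complex.ofReal_ne_zero.2 h0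
  have hy1 : (y:ℂ) + 1 ≠ 0 := by
    intro h; apply h2
    have h' : ((y + 1 : ℝ) : ℂ) = 0 := by push_cast; linear_combination h
    have := Complex.ofReal_eq_zero.1 h'; linarith
  have hy2 : (y:ℂ) - 1 ≠ 0 := by
    intro h; apply h1
    have h' : ((y - 1 : ℝ) : ℂ) = 0 := by push_cast; linear_combination h
    have := Complex.ofReal_eq_zero.1 h'; linarith
  rw [betaHat_decomp, Jint_ne (by intro h; exact h2 (by linarith) : y + 1 ≠ 0),
    Jint_ne (by intro h; exact h1 (by linarith) : y - 1 ≠ 0), Jint_ne h0]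
  have e1 : Complex.exp (2*Real.pi*((y+1:ℝ):ℂ)*Complex.I)
      = Complex.exp (2*Real.pi*y*Complex.I) := by
    rw [show (2*(Real.pi:ℂ)*((y+1:ℝ):ℂ)*Complex.I)
        = 2*Real.pi*y*Complex.I + 2*Real.pi*Complex.I by push_cast; ring,
      Complex.exp_add, Complex.exp_two_pi_mul_I, mul_one]
  have e2 : Complex.exp (2*Real.pi*((y-1:ℝ):ℂ)*Complex.I)
      = Complex.exp (2*Real.pi*y*Complex.I) := by
    rw [show (2*(Real.pi:ℂ)*((y-1:ℝ):ℂ)*Complex.I)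
        = 2*Real.pi*y*Complex.I - 2*Real.pi*Complex.I by push_cast; ring,
      Complex.exp_sub, Complex.exp_two_pi_mul_I, div_one]
  rw [e1, e2]
  have hy12 : (y:ℂ)^2 - 1 ≠ 0 := by
    have h' : (y:ℂ)^2 - 1 = ((y:ℂ)-1) * ((y:ℂ)+1) := by ring
    rw [h']; exact mul_ne_zero hy2 hy1
  have pf : (1/2) * (((y:ℂ)+1)⁻¹) + (1/2) * (((y:ℂ)-1)⁻¹) - (1/4) * ((y:ℂ))⁻¹
      = (3*(y:ℂ)^2+1) * ((4:ℂ))⁻¹ * ((y:ℂ))⁻¹ * (((y:ℂ)^2-1))⁻¹ := by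
    field_simp
    ring
  push_cast
  simp only [div_eq_mul_inv, mul_inv, Complex.inv_I]
  linear_combination (1/(Real.pi:ℂ)) * (Complex.exp (2*(Real.pi:ℂ)*(y:ℂ)*Complex.I) - 1)
    * (-Complex.I) * pf

/- ### The absolute value on the imaginary axis -/

private lemma abs_betaHat (y : ℝ) (h0 : y ≠ 0) (h1 : y ≠ 1) (h2 : y ≠ -1) :
    ‖betaHat (Complex.I * y)‖ =
      2 * |Real.sin (Real.pi * y)| / Real.pi * ((3*y^2+1) / (4 * |y| * |y^2-1|)) := by
  rw [betaHat_formula y h0 h1 h2]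
  have habs1 : ‖(1 / (Real.pi : ℂ))‖ = 1 / Real.pi := by
    rw [norm_div, norm_one, Complex.norm_real, Real.norm_eq_abs, abs_of_pos Real.pi_pos]
  have habs2 : ‖Complex.exp (2*Real.pi*y*Complex.I) - 1‖
      = 2 * |Real.sin (Real.pi * y)| := by
    have h' : (2*(Real.pi:ℂ)*y*Complex.I) = ((2*Real.pi*y : ℝ):ℂ) * Complex.I := by
      push_cast; ring
    rw [h', Complex.exp_mul_I]
    have h'' : Complex.cos ((2*Real.pi*y : ℝ):ℂ) + Complex.sin ((2*Real.pi*y : ℝ):ℂ) * Complex.I - 1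
        = ((Real.cos (2*Real.pi*y) - 1 : ℝ):ℂ) + ((Real.sin (2*Real.pi*y) : ℝ):ℂ) * Complex.I := by
      rw [← Complex.ofReal_cos, ← Complex.ofReal_sin]; push_cast; ring
    rw [h'', Complex.norm_add_mul_I]
    have hsq : (Real.cos (2*Real.pi*y) - 1)^2 + (Real.sin (2*Real.pi*y))^2
        = (2 * Real.sin (Real.pi * y))^2 := by
      have hc : Real.cos (2*Real.pi*y) = 2 * Real.cos (Real.pi*y)^2 - 1 := by
        rw [show 2*Real.pi*y = 2*(Real.pi*y) by ring, Real.cos_two_mul]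
      have hpy := Real.sin_sq_add_cos_sq (Real.pi*y)
      have hs : Real.sin (2*Real.pi*y) = 2 * Real.sin (Real.pi*y) * Real.cos (Real.pi*y) := by
        rw [show 2*Real.pi*y = 2*(Real.pi*y) by ring, Real.sin_two_mul]
      rw [hc, hs]
      nlinarith [hpy]
    rw [hsq, Real.sqrt_sq_eq_abs, abs_mul]
    norm_num
  have h3 : ((3:ℂ)*y^2+1) = ((3*y^2+1 : ℝ):ℂ) := by push_cast; ring
  have h4 : ((4:ℂ) * Complex.I * y * ((y:ℂ)^2-1))
      = ((4:ℝ):ℂ) * Complex.I * ((y:ℝ):ℂ) * (((y^2-1:ℝ)):ℂ) := by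
    push_cast; ring
  have habs3 : ‖(3*(y:ℂ)^2+1) / (4 * Complex.I * y * ((y:ℂ)^2-1))‖
      = (3*y^2+1) / (4 * |y| * |y^2-1|) := by
    rw [h3, h4, norm_div, norm_mul, norm_mul, norm_mul]
    simp only [Complex.norm_real, Real.norm_eq_abs, Complex.norm_I, mul_one]
    rw [_root_.abs_of_nonneg (by positivity : (0:ℝ) ≤ 3*y^2+1)]
    norm_num
  rw [norm_mul, norm_mul, habs1, habs2, habs3]
  ring

/- ### Special values -/

private lemma betaHat_val_zero : betaHat (Complex.I * ((0:ℝ):ℂ)) = -(1/2) := by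
  rw [betaHat_decomp 0, Jint_eq_zero (0+1) 1 (by norm_num) (by norm_num),
    Jint_eq_zero (0-1) (-1) (by norm_num) (by norm_num), Jint_zero]
  have hπ : (Real.pi : ℂ) ≠ 0 := by simpa using Real.pi_ne_zero
  field_simp
  ring

private lemma betaHat_val_one : betaHat (Complex.I * ((1:ℝ):ℂ)) = 1 := by
  rw [betaHat_decomp 1, Jint_eq_zero (1+1) 2 (by norm_num) (by norm_num),
    Jint_eq_zero 1 1 (by norm_num) (by norm_num), show (1:ℝ)-1 = 0 by norm_num, Jint_zero]
  have hπ : (Real.pi : ℂ) ≠ 0 := by simpa using Real.pi_ne_zero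
  field_simp
  ring

private lemma betaHat_val_neg_one : betaHat (Complex.I * ((-1:ℝ):ℂ)) = 1 := by
  rw [betaHat_decomp (-1), Jint_eq_zero (-1-1) (-2) (by norm_num) (by norm_num),
    Jint_eq_zero (-1) (-1) (by norm_num) (by norm_num), show (-1:ℝ)+1 = 0 by norm_num, Jint_zero]
  have hπ : (Real.pi : ℂ) ≠ 0 := by simpa using Real.pi_ne_zero
  field_simp
  ring

/- ### Real inequalities -/

private lemma betaAux_abs_sin (t : ℝ) (ht : |t| ≤ 1) :
    |Real.sin (π * t)| = Real.sin (π * |t|) := by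
  rcases abs_cases t with ⟨h1, h2⟩ | ⟨h1, h2⟩
  · have ht1 : t ≤ 1 := by rw [← h1]; exact ht
    rw [h1]
    refine _root_.abs_of_nonneg (Real.sin_nonneg_of_nonneg_of_le_pi
      (by positivity) ?_)
    calc π * t ≤ π * 1 := mul_le_mul_of_nonneg_left ht1 Real.pi_nonneg
      _ = π := mul_one π
  · have ht1 : -1 ≤ t := by rw [h1] at ht; linarith
    rw [h1]
    have hs : Real.sin (π * t) ≤ 0 := by
      have h3 : (0:ℝ) ≤ Real.sin (π * (-t)) := by
        refine Real.sin_nonneg_of_nonneg_of_le_pi (by nlinarith [Real.pi_pos]) ?_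
        calc π * (-t) ≤ π * 1 := mul_le_mul_of_nonneg_left (by linarith) Real.pi_nonneg
          _ = π := mul_one π
      rw [mul_neg, Real.sin_neg] at h3
      linarith
    rw [_root_.abs_of_nonpos hs, mul_neg, Real.sin_neg]

private lemma betaAux_boundA (y : ℝ) (hy : |y - 1| ≤ 1/2) (hne : y ≠ 1) :
    2 * |Real.sin (π * y)| / π * ((3*y^2+1) / (4 * |y| * |y^2-1|)) ≤ 1 - (y-1)^2 := by
  set u := |y - 1| with hu
  have hu0 : 0 ≤ u := abs_nonneg _
  have hu2 : u ≤ 1/2 := hy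
  have hupos : 0 < u := abs_pos.2 (sub_ne_zero.2 hne)
  have hyl : 1/2 ≤ y := by cases abs_le.1 hy; linarith
  have hyr : y ≤ 3/2 := by cases abs_le.1 hy; linarith
  have hy0 : (0:ℝ) < y := by linarith
  have habsy : |y| = y := _root_.abs_of_pos hy0
  have habsy2 : |y^2 - 1| = u * (y+1) := by
    rw [show y^2 - 1 = (y-1)*(y+1) by ring, abs_mul, hu,
      _root_.abs_of_pos (by linarith : (0:ℝ) < y + 1)]
  have habssin : |Real.sin (π * y)| = Real.sin (π * u) := by
    have h' : Real.sin (π * (y - 1)) = -Real.sin (π * y) := by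
      rw [show π * (y-1) = π * y - π by ring, Real.sin_sub_pi]
    have : |Real.sin (π * (y-1))| = Real.sin (π * |y-1|) :=
      betaAux_abs_sin (y-1) (by linarith)
    rw [h', abs_neg] at this
    rw [this]
  rw [habsy, habsy2, habssin]
  obtain ⟨G, hGdef⟩ : ∃ g : ℝ, g = 1 - (3.1415*u)^2/6 + (3.1416*u)^4/120 := ⟨_, rfl⟩
  have hG : Real.sin (π*u) ≤ π*u*G := by rw [hGdef]; exact betaAux_sin_pi_mul_le hu0
  have hside : 2*G*(3*y^2+1) ≤ 4*(1-u^2)*(y*(y+1)) := by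
    rcases (abs_eq hu0).1 hu.symm with h | h
    · -- y = 1 + u
      have hyu : y = 1 + u := by linarith
      rw [hyu, hGdef]
      nlinarith [sq_nonneg u, sq_nonneg (u-1/2), pow_nonneg hu0 3, pow_nonneg hu0 4,
        pow_nonneg hu0 5, pow_nonneg hu0 6, sq_nonneg (u*(u-1/2)), sq_nonneg (u^2*(u-1/2))]
    · -- y = 1 - u
      have hyu : y = 1 - u := by linarith
      rw [hyu, hGdef]
      nlinarith [sq_nonneg u, sq_nonneg (u-1/2), pow_nonneg hu0 3, pow_nonneg hu0 4,
        pow_nonneg hu0 5, pow_nonneg hu0 6, sq_nonneg (u*(u-1/2)), sq_nonneg (u^2*(u-1/2))]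
  have hD : (0:ℝ) < 4 * y * (u * (y+1)) := by positivity
  rw [div_mul_div_comm, div_le_iff₀ (by positivity)]
  have h1 : 2 * Real.sin (π*u) * (3*y^2+1) ≤ 2 * (π*u*G) * (3*y^2+1) :=
    mul_le_mul_of_nonneg_right (by linarith) (by positivity)
  have h2 : (π*u) * (2*G*(3*y^2+1)) ≤ (π*u) * (4*(1-u^2)*(y*(y+1))) :=
    mul_le_mul_of_nonneg_left hside (by positivity)
  have husq : (y-1)^2 = u^2 := by rw [hu, _root_.sq_abs]
  rw [husq]
  nlinarith [h1, h2]

private lemma betaAux_boundC (y : ℝ) (hy0 : 0 < y) (h1 : 1/2 < |y - 1|) (hne1 : y ≠ 1) :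
    2 * |Real.sin (π * y)| / π * ((3*y^2+1) / (4 * |y| * |y^2-1|)) ≤ 3/4 := by
  have habsy : |y| = y := _root_.abs_of_pos hy0
  rcases lt_or_ge y 1 with hc | hc
  · -- 0 < y < 1/2
    have hys : y < 1/2 := by
      rcases abs_cases (y-1) with ⟨h, _⟩ | ⟨h, _⟩ <;> [linarith; linarith]
    have habsy2 : |y^2 - 1| = 1 - y^2 := by
      rw [abs_of_neg (by nlinarith : y^2 - 1 < 0)]; ring
    have habssin : |Real.sin (π * y)| = Real.sin (π * y) :=
      _root_.abs_of_nonneg (Real.sin_nonneg_of_nonneg_of_le_pi (by positivity)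
        (by nlinarith [Real.pi_pos]))
    rw [habsy, habsy2, habssin]
    obtain ⟨G, hGdef⟩ : ∃ g : ℝ, g = 1 - (3.1415*y)^2/6 + (3.1416*y)^4/120 := ⟨_, rfl⟩
    have hG : Real.sin (π*y) ≤ π*y*G := by rw [hGdef]; exact betaAux_sin_pi_mul_le hy0.le
    have hside : 2*G*(3*y^2+1) ≤ 3*(1-y^2) := by
      rw [hGdef]
      nlinarith [sq_nonneg y, sq_nonneg (y-1/2), pow_nonneg hy0.le 3, pow_nonneg hy0.le 4,
        pow_nonneg hy0.le 5, pow_nonneg hy0.le 6, sq_nonneg (y*(y-1/2)), sq_nonneg (y^2*(y-1/2))]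
    have hDpos : (0:ℝ) < π * (4 * y * (1 - y^2)) := by
      have : (0:ℝ) < 1 - y^2 := by nlinarith
      have : (0:ℝ) < 4 * y * (1 - y^2) := by positivity
      exact mul_pos Real.pi_pos this
    rw [div_mul_div_comm, div_le_iff₀ hDpos]
    have h1' : 2 * Real.sin (π*y) * (3*y^2+1) ≤ 2 * (π*y*G) * (3*y^2+1) :=
      mul_le_mul_of_nonneg_right (by linarith) (by positivity)
    have h2' : (π*y) * (2*G*(3*y^2+1)) ≤ (π*y) * (3*(1-y^2)) :=
      mul_le_mul_of_nonneg_left hside (by positivity)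
    nlinarith [h1', h2']
  · -- y > 3/2
    have hys : 3/2 < y := by
      rcases abs_cases (y-1) with ⟨h, _⟩ | ⟨h, _⟩ <;> [linarith; linarith]
    have habsy2 : |y^2 - 1| = y^2 - 1 := abs_of_pos (by nlinarith)
    rw [habsy, habsy2]
    have hsin : |Real.sin (π * y)| ≤ 1 := Real.abs_sin_le_one _
    have hπl : (3.1415:ℝ) ≤ π := by linarith [Real.pi_gt_d6]
    have hD : (0:ℝ) < 4 * y * (y^2-1) := by nlinarith
    rw [div_mul_div_comm, div_le_iff₀ (mul_pos Real.pi_pos hD)]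
    have hpoly : 2 * (3*y^2+1) ≤ 3/4 * (3.1415 * (4*y*(y^2-1))) := by nlinarith [sq_nonneg (y - 3/2)]
    nlinarith [mul_le_mul_of_nonneg_right hsin (by positivity : (0:ℝ) ≤ 2*(3*y^2+1)),
      mul_le_mul_of_nonneg_left hπl (by nlinarith : (0:ℝ) ≤ 3/4 * (4*y*(y^2-1)))]

/-- The expression is even in `y`. -/
private lemma betaAux_even (y : ℝ) :
    2 * |Real.sin (π * (-y))| / π * ((3*(-y)^2+1) / (4 * |(-y)| * |(-y)^2-1|))
      = 2 * |Real.sin (π * y)| / π * ((3*y^2+1) / (4 * |y| * |y^2-1|)) := by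
  rw [mul_neg, Real.sin_neg, abs_neg, neg_sq, abs_neg]

end Aux

theorem betaHat_imaginary_axis_bounds (y : ℝ) :
    (|y - 1| ≤ 1/2 → ‖betaHat (Complex.I * y)‖ ≤ 1 - (y - 1)^2) ∧
    (|y + 1| ≤ 1/2 → ‖betaHat (Complex.I * y)‖ ≤ 1 - (y + 1)^2) ∧
    (1/2 < |y - 1| → 1/2 < |y + 1| → ‖betaHat (Complex.I * y)‖ ≤ 3/4) := by
  refine ⟨?_, ?_, ?_⟩
  · intro h
    by_cases hy1 : y = 1
    · subst hy1
      rw [betaHat_val_one]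
      norm_num
    · have hyl : 1/2 ≤ y := by cases abs_le.1 h; linarith
      have h0 : y ≠ 0 := by intro h'; rw [h'] at hyl; norm_num at hyl
      have h2 : y ≠ -1 := by intro h'; rw [h'] at hyl; norm_num at hyl
      rw [abs_betaHat y h0 hy1 h2]
      exact betaAux_boundA y h hy1
  · intro h
    by_cases hy1 : y = -1
    · subst hy1
      rw [betaHat_val_neg_one]
      norm_num
    · have hyl : y ≤ -1/2 := by cases abs_le.1 h; linarith
      have h0 : y ≠ 0 := by intro h'; rw [h'] at hyl; norm_num at hyl
      have h1' : y ≠ 1 := by intro h'; rw [h'] at hyl; norm_num at hyl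
      rw [abs_betaHat y h0 h1' hy1]
      have hA := betaAux_boundA (-y)
        (by rw [show -y - 1 = -(y+1) by ring, abs_neg]; exact h)
        (by intro h'; exact hy1 (by linarith))
      rw [betaAux_even y] at hA
      have : (-y - 1)^2 = (y+1)^2 := by ring
      linarith [hA]
  · intro ha hb
    by_cases h0 : y = 0
    · subst h0
      rw [betaHat_val_zero, show (-(1/2) : ℂ) = ((-(1/2) : ℝ) : ℂ) by norm_num,
        Complex.norm_real, Real.norm_eq_abs, _root_.abs_of_nonpos (by norm_num : (-(1/2):ℝ) ≤ 0)]
      norm_num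
    · rcases lt_or_gt_of_ne h0 with hneg | hpos
      · -- y < 0 : use evenness
        have h1' : y ≠ 1 := by linarith
        have h2' : y ≠ -1 := by intro h'; rw [h'] at hb; norm_num at hb
        rw [abs_betaHat y h0 h1' h2']
        have hC := betaAux_boundC (-y) (by linarith)
          (by rw [show -y - 1 = -(y+1) by ring, abs_neg]; exact hb)
          (by intro h'; exact h2' (by linarith))
        rw [betaAux_even y] at hC
        exact hC
      · have h2' : y ≠ -1 := by linarith
        have h1' : y ≠ 1 := by intro h'; rw [h'] at ha; norm_num at ha
        rw [abs_betaHat y h0 h1' h2']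
        exact betaAux_boundC y hpos ha h1'
end

section
/- Let ω > 0, T = 2π/ω, A an m×m complex matrix, and F, ŵ ∈ ℂ^m such that iω·ŵ = A·ŵ − F. Then the function w(t) := e^{iωt}·ŵ satisfies the differential equation w'(t) = A·w(t) − F·e^{iωt} for all t ∈ ℝ, and moreover (2/T) ∫₀^T (cos(ωt) − 1/4)·w(t) dt = ŵ; that is, ŵ is a fixed point of the semi-discrete WaveHoltz filter. -/
open Complex intervalIntegral

theorem waveholtz_fixed_point {m : ℕ} (ω : ℝ) (hω : 0 < ω)
    (A : Matrix (Fin m) (Fin m) ℂ) (F what : Fin m → ℂ)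
    (hHelm : (Complex.I * ω) • what = A.mulVec what - F) :
    (∀ t : ℝ, HasDerivAt (fun s : ℝ => Complex.exp (Complex.I * ω * s) • what)
        (A.mulVec (Complex.exp (Complex.I * ω * t) • what) -
          Complex.exp (Complex.I * ω * t) • F) t) ∧
      (2 / ((2 * Real.pi / ω : ℝ) : ℂ)) •
          (∫ t in (0:ℝ)..(2 * Real.pi / ω),
            (((Real.cos (ω * t) : ℂ) - 1/4) • (Complex.exp (Complex.I * ω * t) • what))) =
        what := by
  have hω' : (ω : ℂ) ≠ 0 := by exact_mod_cast hω.ne'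
  constructor
  · intro t
    have h0 : HasDerivAt (fun s : ℝ => ((s : ℂ))) 1 t := Complex.ofRealCLM.hasDerivAt
    have h1 : HasDerivAt (fun s : ℝ => Complex.exp (Complex.I * ω * s))
        (Complex.I * ω * Complex.exp (Complex.I * ω * t)) t := by
      simpa [mul_comm] using ((h0.const_mul (Complex.I * ω)).cexp)
    have h2 := h1.smul_const what
    refine h2.congr_deriv ?_
    rw [mul_smul, smul_comm, hHelm, smul_sub, Matrix.mulVec_smul]
  · have key : ∀ t : ℝ, (((Real.cos (ω * t) : ℂ) - 1/4) • (Complex.exp (Complex.I * ω * t) • what))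
        = ((((Real.cos (ω * t) : ℂ) - 1/4) * Complex.exp (Complex.I * ω * t)) • what) := by
      intro t; rw [smul_smul]
    simp only [key]
    rw [intervalIntegral.integral_smul_const, smul_smul]
    have hrw : ∀ t : ℝ, (((Real.cos (ω * t) : ℂ) - 1/4) * Complex.exp (Complex.I * ω * t))
        = (1/2) * Complex.exp ((2 * (Complex.I * ω)) * t) + (1/2 : ℂ)
          - (1/4) * Complex.exp ((Complex.I * ω) * t) := by
      intro t
      have hE := Complex.exp_ne_zero (Complex.I * ω * t)
      rw [Complex.ofReal_cos]
      push_cast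
      rw [Complex.cos]
      have e2 : Complex.exp ((2 * (Complex.I * ω)) * t)
          = Complex.exp (Complex.I * ω * t) * Complex.exp (Complex.I * ω * t) := by
        rw [← Complex.exp_add]; ring_nf
      have en : Complex.exp (-((ω : ℂ) * t) * Complex.I)
          = (Complex.exp (Complex.I * ω * t))⁻¹ := by
        rw [← Complex.exp_neg]; ring_nf
      have ep : Complex.exp ((ω : ℂ) * t * Complex.I) = Complex.exp (Complex.I * ω * t) := by
        ring_nf
      rw [e2, en, ep]
      field_simp
    have h2ne : (2 * (Complex.I * ω)) ≠ 0 := by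
      simp [Complex.I_ne_zero, hω']
    have h1ne : (Complex.I * ω) ≠ 0 := by
      simp [Complex.I_ne_zero, hω']
    have i1 : (∫ t in (0:ℝ)..(2 * Real.pi / ω), Complex.exp ((2 * (Complex.I * ω)) * t)) = 0 := by
      rw [integral_exp_mul_complex h2ne]
      have : (2 * (Complex.I * ω)) * ((2 * Real.pi / ω : ℝ) : ℂ)
          = ((2 : ℤ) : ℂ) * (2 * (Real.pi : ℂ) * Complex.I) := by
        push_cast
        field_simp
      rw [this, Complex.exp_int_mul_two_pi_mul_I]
      simp
    have i2 : (∫ t in (0:ℝ)..(2 * Real.pi / ω), Complex.exp ((Complex.I * ω) * t)) = 0 := by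
      rw [integral_exp_mul_complex h1ne]
      have : (Complex.I * ω) * ((2 * Real.pi / ω : ℝ) : ℂ)
          = ((1 : ℤ) : ℂ) * (2 * (Real.pi : ℂ) * Complex.I) := by
        push_cast
        field_simp
      rw [this, Complex.exp_int_mul_two_pi_mul_I]
      simp
    have c1 : Continuous fun t : ℝ => Complex.exp ((2 * (Complex.I * ω)) * t) := by fun_prop
    have c2 : Continuous fun t : ℝ => Complex.exp ((Complex.I * ω) * t) := by fun_prop
    have hInt : (∫ t in (0:ℝ)..(2 * Real.pi / ω),
        (((Real.cos (ω * t) : ℂ) - 1/4) * Complex.exp (Complex.I * ω * t)))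
        = ((2 * Real.pi / ω : ℝ) : ℂ) / 2 := by
      rw [intervalIntegral.integral_congr (fun t _ => hrw t)]
      rw [intervalIntegral.integral_sub (((c1.const_mul (1/2 : ℂ)).intervalIntegrable _ _).add
            (intervalIntegrable_const)) ((c2.const_mul (1/4 : ℂ)).intervalIntegrable _ _),
        intervalIntegral.integral_add ((c1.const_mul (1/2 : ℂ)).intervalIntegrable _ _)
            intervalIntegrable_const,
        intervalIntegral.integral_const_mul, intervalIntegral.integral_const_mul, i1, i2]
      simp
      ring
    rw [hInt]
    have hT : ((2 * Real.pi / ω : ℝ) : ℂ) ≠ 0 := by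
      have : (2 * Real.pi / ω : ℝ) ≠ 0 := by positivity
      exact_mod_cast this
    have : 2 / ((2 * Real.pi / ω : ℝ) : ℂ) * (((2 * Real.pi / ω : ℝ) : ℂ) / 2) = 1 := by
      have hπ : ((Real.pi : ℂ)) ≠ 0 := Complex.ofReal_ne_zero.mpr Real.pi_ne_zero
      field_simp
    rw [this, one_smul]
end
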